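/- Let n = 2m be an even positive integer, let C ⊆ ℝ² be a strict closed convex cone with nonempty interior, and let g ∈ GL(2,ℤ) preserve C. Let P : ℝ² → ℝ be a homogeneous polynomial function of degree n such that P(g·v) = P(v) for all v ∈ ℝ², and such that P(v₀) ≠ 0 for some v₀ in the interior of C. Assume moreover that there exist no real number c and no homogeneous polynomial function q : ℝ² → ℝ of degree 2 such that P(v) = c·(q(v))^m for all v ∈ ℝ². Then g² is the identity matrix. -/

import Mathlib

open MvPolynomial

namespace SqAux

lemma eval_bind1 (f : Fin 2 → ℝ) (g : Fin 2 → MvPolynomial (Fin 2) ℝ)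
    (φ : MvPolynomial (Fin 2) ℝ) :
    eval f (bind₁ g φ) = eval (fun i => eval f (g i)) φ := by
  have h : ∀ (p : MvPolynomial (Fin 2) ℝ) (f : Fin 2 → ℝ), eval f p = aeval f p := by
    intro p f
    rw [MvPolynomial.aeval_def, MvPolynomial.eval]
    simp [eval₂Hom, Algebra.algebraMap_self]
  rw [h, h, MvPolynomial.aeval_bind₁]
  congr 1

lemma support_deg {n : ℕ} {P : MvPolynomial (Fin 2) ℝ} (hP : P.IsHomogeneous n)
    {d : Fin 2 →₀ ℕ} (hd : d ∈ P.support) : d 0 + d 1 = n := by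
  have h1 : ∑ i ∈ d.support, d i = n := by
    simpa [Finsupp.weight_apply, Finsupp.sum] using hP (MvPolynomial.mem_support_iff.mp hd)
  have h2 : ∑ i ∈ d.support, d i = ∑ i : Fin 2, d i :=
    Finset.sum_subset (Finset.subset_univ _)
      (fun i _ hi => Finsupp.notMem_support_iff.mp hi)
  rw [h2, Fin.sum_univ_two] at h1
  exact h1

lemma eval_smul_homog {n : ℕ} {P : MvPolynomial (Fin 2) ℝ} (hP : P.IsHomogeneous n)
    (r : ℝ) (v : Fin 2 → ℝ) : eval (r • v) P = r ^ n * eval v P := by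
  rw [eval_eq', eval_eq', Finset.mul_sum]
  apply Finset.sum_congr rfl
  intro d hd
  have hdn := support_deg hP hd
  have h : ∏ i, (r • v) i ^ d i = r ^ n * ∏ i, v i ^ d i := by
    simp only [Pi.smul_apply, smul_eq_mul, mul_pow, Fin.prod_univ_two]
    rw [← hdn, pow_add]; ring
  rw [h]; ring

lemma bind₁_scale_monomial (e : Fin 2 → ℝ) (d : Fin 2 →₀ ℕ) (a : ℝ) :
    bind₁ (fun i => C (e i) * X i) (monomial d a)
      = monomial d (a * (e 0 ^ d 0 * e 1 ^ d 1)) := by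
  rw [bind₁_monomial]
  have h : (∏ i ∈ d.support, (C (e i) * X i) ^ d i)
      = C (∏ i ∈ d.support, e i ^ d i) * ∏ i ∈ d.support, (X i : MvPolynomial (Fin 2) ℝ) ^ d i := by
    rw [map_prod, ← Finset.prod_mul_distrib]
    exact Finset.prod_congr rfl (fun i _ => by rw [mul_pow, map_pow])
  have hprod : ∏ i ∈ d.support, e i ^ d i = e 0 ^ d 0 * e 1 ^ d 1 := by
    rw [Finset.prod_subset (Finset.subset_univ d.support)
      (fun i _ hi => by simp [Finsupp.notMem_support_iff.mp hi])]
    exact Fin.prod_univ_two _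
  rw [h, prod_X_pow_eq_monomial, hprod, ← mul_assoc, ← map_mul, C_mul_monomial, mul_one]

lemma coeff_scale (e : Fin 2 → ℝ) (Q : MvPolynomial (Fin 2) ℝ) (d : Fin 2 →₀ ℕ) :
    coeff d (bind₁ (fun i => C (e i) * X i) Q)
      = (e 0 ^ d 0 * e 1 ^ d 1) * coeff d Q := by
  conv_lhs => rw [Q.as_sum]
  rw [map_sum, MvPolynomial.coeff_sum]
  simp only [bind₁_scale_monomial, coeff_monomial]
  rw [Finset.sum_ite_eq' Q.support d]
  by_cases hd : d ∈ Q.support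
  · rw [if_pos hd]; ring
  · rw [if_neg hd, MvPolynomial.notMem_support_iff.mp hd]; ring

noncomputable def QQ (u w : Fin 2 → ℝ) (P : MvPolynomial (Fin 2) ℝ) : MvPolynomial (Fin 2) ℝ :=
  bind₁ (fun i => C (u i) * X 0 + C (w i) * X 1) P

lemma pow_inj {a : ℝ} (ha : 1 < a) {i j : ℕ} (h : a ^ i = a ^ j) : i = j := by
  rcases lt_trichotomy i j with hij | hij | hij
  · exact absurd h (ne_of_lt (pow_lt_pow_right₀ ha hij))
  · exact hij
  · exact absurd h.symm (ne_of_lt (pow_lt_pow_right₀ ha hij))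

lemma QQ_homog {n : ℕ} (u w : Fin 2 → ℝ) {P : MvPolynomial (Fin 2) ℝ}
    (hP : P.IsHomogeneous n) : (QQ u w P).IsHomogeneous n := by
  have h := hP.aeval (fun i => (C (u i) * X 0 + C (w i) * X 1 : MvPolynomial (Fin 2) ℝ))
    (fun i => ((isHomogeneous_X _ _).C_mul _).add ((isHomogeneous_X _ _).C_mul _))
  rw [one_mul] at h
  rw [QQ, MvPolynomial.bind₁]
  exact h

lemma eval_QQ (u w : Fin 2 → ℝ) (P : MvPolynomial (Fin 2) ℝ) (z : Fin 2 → ℝ) :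
    eval z (QQ u w P) = eval (z 0 • u + z 1 • w) P := by
  rw [QQ, eval_bind1]
  have h : (fun i => eval z (C (u i) * X 0 + C (w i) * X 1)) = z 0 • u + z 1 • w := by
    funext i
    simp only [map_add, map_mul, eval_C, eval_X, Pi.add_apply, Pi.smul_apply, smul_eq_mul]
    ring
  rw [h]

lemma coord (u w v : Fin 2 → ℝ) (hD : u 0 * w 1 - u 1 * w 0 ≠ 0) :
    v = ((w 1 * v 0 - w 0 * v 1) / (u 0 * w 1 - u 1 * w 0)) • u
      + ((u 0 * v 1 - u 1 * v 0) / (u 0 * w 1 - u 1 * w 0)) • w := by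
  funext i
  fin_cases i <;>
  · simp only [Pi.add_apply, Pi.smul_apply, smul_eq_mul, Fin.zero_eta, Fin.mk_one]
    rw [div_mul_eq_mul_div, div_mul_eq_mul_div, ← add_div, eq_div_iff hD]
    ring

lemma diag_case (m : ℕ) (P : MvPolynomial (Fin 2) ℝ) (hP : P.IsHomogeneous (2 * m))
    (u w : Fin 2 → ℝ) (hD : u 0 * w 1 - u 1 * w 0 ≠ 0)
    (lam mu : ℝ) (habs : 1 < |lam|) (hprodabs : |lam| * |mu| = 1)
    (hinvQ : ∀ x y : ℝ, eval ((lam * x) • u + (mu * y) • w) P = eval (x • u + y • w) P) :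
    ∃ c q, MvPolynomial.IsHomogeneous q 2 ∧
      ∀ v : Fin 2 → ℝ, eval v P = c * (eval v q) ^ m := by
  set Q := QQ u w P with hQdef
  have hQhom : Q.IsHomogeneous (2 * m) := QQ_homog u w hP
  have hscale : bind₁ (fun i => C ((![lam, mu] : Fin 2 → ℝ) i) * X i) Q = Q := by
    apply MvPolynomial.funext
    intro z
    rw [eval_bind1]
    have h1 : (fun i => eval z (C ((![lam, mu] : Fin 2 → ℝ) i) * X i))
        = ![lam * z 0, mu * z 1] := by
      funext i; fin_cases i <;> simp
    rw [h1, hQdef, eval_QQ, eval_QQ]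
    have h2 : (![lam * z 0, mu * z 1] : Fin 2 → ℝ) 0 = lam * z 0 := rfl
    have h3 : (![lam * z 0, mu * z 1] : Fin 2 → ℝ) 1 = mu * z 1 := rfl
    rw [h2, h3]
    exact hinvQ (z 0) (z 1)
  have hlam0 : (0:ℝ) < |lam| := lt_trans one_pos habs
  have hsupp : ∀ d ∈ Q.support, d 0 = m ∧ d 1 = m := by
    intro d hd
    have hc : coeff d Q ≠ 0 := MvPolynomial.mem_support_iff.mp hd
    have hcs := coeff_scale (![lam, mu] : Fin 2 → ℝ) Q d
    rw [hscale] at hcs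
    have h1 : lam ^ d 0 * mu ^ d 1 = 1 := by
      have h2 : ((![lam, mu] : Fin 2 → ℝ) 0 ^ d 0 * (![lam, mu] : Fin 2 → ℝ) 1 ^ d 1)
          * coeff d Q = 1 * coeff d Q := by rw [one_mul]; exact hcs.symm
      have h3 := mul_right_cancel₀ hc h2
      simpa using h3
    have h4 : |lam| ^ d 0 * |mu| ^ d 1 = 1 := by
      have := congrArg abs h1
      simpa [abs_mul, abs_pow] using this
    have hmu0 : (0:ℝ) < |mu| := by nlinarith
    have h5 : |lam| ^ d 0 = |lam| ^ d 1 := by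
      have hmu : |mu| = |lam|⁻¹ := by field_simp; linarith [hprodabs]
      rw [hmu, inv_pow] at h4
      field_simp at h4
      linarith [h4]
    have h6 : d 0 = d 1 := pow_inj habs h5
    have h7 : d 0 + d 1 = 2 * m := support_deg hQhom hd
    omega
  have hQeval : ∀ z : Fin 2 → ℝ,
      eval z Q = coeff (Finsupp.single 0 m + Finsupp.single 1 m) Q * (z 0 ^ m * z 1 ^ m) := by
    intro z
    have hsub : Q.support ⊆ {Finsupp.single 0 m + Finsupp.single 1 m} := by
      intro d hd
      obtain ⟨h0, h1⟩ := hsupp d hd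
      refine Finset.mem_singleton.mpr (Finsupp.ext fun i => ?_)
      fin_cases i <;> simp [h0, h1, Finsupp.single_apply]
    rw [eval_eq', Finset.sum_subset hsub
      (fun d _ hd => by rw [MvPolynomial.notMem_support_iff.mp hd, zero_mul])]
    rw [Finset.sum_singleton, Fin.prod_univ_two]
    simp [Finsupp.single_apply]
  refine ⟨coeff (Finsupp.single 0 m + Finsupp.single 1 m) Q,
    (C (w 1 / (u 0 * w 1 - u 1 * w 0)) * X 0 + C (-w 0 / (u 0 * w 1 - u 1 * w 0)) * X 1) *
    (C (-u 1 / (u 0 * w 1 - u 1 * w 0)) * X 0 + C (u 0 / (u 0 * w 1 - u 1 * w 0)) * X 1),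
    ?_, ?_⟩
  · have h1 : ((C (w 1 / (u 0 * w 1 - u 1 * w 0)) * X 0 +
        C (-w 0 / (u 0 * w 1 - u 1 * w 0)) * X 1 : MvPolynomial (Fin 2) ℝ)).IsHomogeneous 1 :=
      ((isHomogeneous_X _ _).C_mul _).add ((isHomogeneous_X _ _).C_mul _)
    have h2 : ((C (-u 1 / (u 0 * w 1 - u 1 * w 0)) * X 0 +
        C (u 0 / (u 0 * w 1 - u 1 * w 0)) * X 1 : MvPolynomial (Fin 2) ℝ)).IsHomogeneous 1 :=
      ((isHomogeneous_X _ _).C_mul _).add ((isHomogeneous_X _ _).C_mul _)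
    exact h1.mul h2
  · intro v
    have hv := coord u w v hD
    have h4 : eval v P = coeff (Finsupp.single 0 m + Finsupp.single 1 m) Q *
        (((w 1 * v 0 - w 0 * v 1) / (u 0 * w 1 - u 1 * w 0)) ^ m *
         ((u 0 * v 1 - u 1 * v 0) / (u 0 * w 1 - u 1 * w 0)) ^ m) := by
      have h5 := eval_QQ u w P ![(w 1 * v 0 - w 0 * v 1) / (u 0 * w 1 - u 1 * w 0),
        (u 0 * v 1 - u 1 * v 0) / (u 0 * w 1 - u 1 * w 0)]
      simp only [Matrix.cons_val_zero, Matrix.cons_val_one, Matrix.head_cons] at h5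
      conv_lhs => rw [hv]
      rw [← h5, hQeval]
      simp
    rw [h4]
    have h6 : eval v ((C (w 1 / (u 0 * w 1 - u 1 * w 0)) * X 0 +
        C (-w 0 / (u 0 * w 1 - u 1 * w 0)) * X 1) *
        (C (-u 1 / (u 0 * w 1 - u 1 * w 0)) * X 0 + C (u 0 / (u 0 * w 1 - u 1 * w 0)) * X 1))
        = ((w 1 * v 0 - w 0 * v 1) / (u 0 * w 1 - u 1 * w 0)) *
          ((u 0 * v 1 - u 1 * v 0) / (u 0 * w 1 - u 1 * w 0)) := by
      simp only [map_mul, map_add, eval_C, eval_X]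
      ring
    rw [h6, mul_pow]

lemma eval_eq_aeval (p : MvPolynomial (Fin 2) ℝ) (g : Fin 2 → ℝ) : eval g p = aeval g p := by
  rw [MvPolynomial.aeval_def, MvPolynomial.eval]
  simp [eval₂Hom, Algebra.algebraMap_self]

lemma eval_aeval_poly (Q : MvPolynomial (Fin 2) ℝ) (f : Fin 2 → Polynomial ℝ) (x : ℝ) :
    (MvPolynomial.aeval f Q).eval x = eval (fun i => (f i).eval x) Q := by
  have h1 := MvPolynomial.comp_aeval_apply (f := f) (Polynomial.aeval x : Polynomial ℝ →ₐ[ℝ] ℝ) Q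
  have h3 : (fun i => (Polynomial.aeval x) (f i)) = fun i => (f i).eval x := by
    funext i; rw [← Polynomial.coe_aeval_eq_eval]
  rw [eval_eq_aeval, ← Polynomial.coe_aeval_eq_eval, h1, h3]

lemma unip_case (m : ℕ) (hm : 0 < m) (P : MvPolynomial (Fin 2) ℝ)
    (hP : P.IsHomogeneous (2 * m))
    (u w : Fin 2 → ℝ) (hD : u 0 * w 1 - u 1 * w 0 ≠ 0)
    (hinvQ : ∀ x y : ℝ, eval ((x + y) • u + y • w) P = eval (x • u + y • w) P) :
    ∃ c q, MvPolynomial.IsHomogeneous q 2 ∧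
      ∀ v : Fin 2 → ℝ, eval v P = c * (eval v q) ^ m := by
  set Q := QQ u w P with hQdef
  have hfun : ∀ x y : ℝ, eval ![x + y, y] Q = eval ![x, y] Q := by
    intro x y
    rw [hQdef, eval_QQ, eval_QQ]
    simpa using hinvQ x y
  set p : Polynomial ℝ := MvPolynomial.aeval ![Polynomial.X, 1] Q with hpdef
  have hpe : ∀ x : ℝ, p.eval x = eval ![x, (1:ℝ)] Q := by
    intro x
    rw [hpdef, eval_aeval_poly]
    have harg : (fun i => Polynomial.eval x (![Polynomial.X, 1] i)) = ![x, (1:ℝ)] := by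
      funext i; fin_cases i <;> simp
    rw [harg]
  have hper : ∀ x : ℝ, p.eval (x + 1) = p.eval x := by
    intro x; rw [hpe, hpe]; exact hfun x 1
  have hnat : ∀ k : ℕ, p.eval (k : ℝ) = p.eval 0 := by
    intro k
    induction k with
    | zero => norm_num
    | succ n ih => push_cast; rw [hper]; exact_mod_cast ih
  have hsub : Set.range ((↑) : ℕ → ℝ) ⊆ {x | (p - Polynomial.C (p.eval 0)).IsRoot x} := by
    rintro _ ⟨k, rfl⟩
    simp [Polynomial.IsRoot, hnat k]
  have hconst : p - Polynomial.C (p.eval 0) = 0 :=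
    Polynomial.eq_zero_of_infinite_isRoot _
      ((Set.infinite_range_of_injective Nat.cast_injective).mono hsub)
  have hpc : p = Polynomial.C (p.eval 0) := by
    have := sub_eq_zero.mp hconst; exact this
  have hx1 : ∀ x : ℝ, eval ![x, (1:ℝ)] Q = p.eval 0 := by
    intro x
    rw [← hpe]
    conv_lhs => rw [hpc]
    simp
  have hyne : ∀ x y : ℝ, y ≠ 0 → eval ![x, y] Q = p.eval 0 * y ^ (2 * m) := by
    intro x y hy
    have h1 : eval ![x, y] Q = eval (x • u + y • w) P := by
      rw [hQdef, eval_QQ]; simp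
    have h2 : x • u + y • w = y • ((x / y) • u + (1:ℝ) • w) := by
      rw [smul_add, smul_smul, smul_smul]
      field_simp
    have h3 : eval ((x / y) • u + (1:ℝ) • w) P = eval ![x / y, (1:ℝ)] Q := by
      rw [hQdef, eval_QQ]; simp
    rw [h1, h2, eval_smul_homog hP, h3, hx1]
    ring
  have hall : ∀ x y : ℝ, eval ![x, y] Q = p.eval 0 * y ^ (2 * m) := by
    intro x y
    set py : Polynomial ℝ := MvPolynomial.aeval ![Polynomial.C x, Polynomial.X] Q with hpydef
    have hpye : ∀ z : ℝ, py.eval z = eval ![x, z] Q := by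
      intro z
      rw [hpydef, eval_aeval_poly]
      have harg : (fun i => Polynomial.eval z (![Polynomial.C x, Polynomial.X] i)) = ![x, z] := by
        funext i; fin_cases i <;> simp
      rw [harg]
    have hsub2 : ({(0:ℝ)}ᶜ : Set ℝ) ⊆
        {z | (py - Polynomial.C (p.eval 0) * Polynomial.X ^ (2 * m)).IsRoot z} := by
      intro z hz
      have hz0 : z ≠ 0 := hz
      simp [Polynomial.IsRoot, hpye z, hyne x z hz0]
    have hzero : py - Polynomial.C (p.eval 0) * Polynomial.X ^ (2 * m) = 0 :=
      Polynomial.eq_zero_of_infinite_isRoot _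
        (((Set.finite_singleton (0:ℝ)).infinite_compl).mono hsub2)
    have := sub_eq_zero.mp hzero
    calc eval ![x, y] Q = py.eval y := (hpye y).symm
    _ = p.eval 0 * y ^ (2 * m) := by rw [this]; simp
  refine ⟨p.eval 0,
    (C (-u 1 / (u 0 * w 1 - u 1 * w 0)) * X 0 + C (u 0 / (u 0 * w 1 - u 1 * w 0)) * X 1) ^ 2,
    ?_, ?_⟩
  · have h1 : ((C (-u 1 / (u 0 * w 1 - u 1 * w 0)) * X 0 +
        C (u 0 / (u 0 * w 1 - u 1 * w 0)) * X 1 : MvPolynomial (Fin 2) ℝ)).IsHomogeneous 1 :=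
      ((isHomogeneous_X _ _).C_mul _).add ((isHomogeneous_X _ _).C_mul _)
    simpa using h1.pow 2
  · intro v
    have hv := coord u w v hD
    have h5 := eval_QQ u w P ![(w 1 * v 0 - w 0 * v 1) / (u 0 * w 1 - u 1 * w 0),
      (u 0 * v 1 - u 1 * v 0) / (u 0 * w 1 - u 1 * w 0)]
    simp only [Matrix.cons_val_zero, Matrix.cons_val_one, Matrix.head_cons] at h5
    have h6 : eval v P = p.eval 0 *
        ((u 0 * v 1 - u 1 * v 0) / (u 0 * w 1 - u 1 * w 0)) ^ (2 * m) := by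
      conv_lhs => rw [hv]
      rw [← h5, hall]
    rw [h6]
    have h7 : eval v ((C (-u 1 / (u 0 * w 1 - u 1 * w 0)) * X 0 +
        C (u 0 / (u 0 * w 1 - u 1 * w 0)) * X 1) ^ 2)
        = ((u 0 * v 1 - u 1 * v 0) / (u 0 * w 1 - u 1 * w 0)) ^ 2 := by
      simp only [map_pow, map_add, map_mul, eval_C, eval_X]
      ring
    rw [h7, ← pow_mul]

lemma unip_matrix_case (m : ℕ) (hm : 0 < m) (P : MvPolynomial (Fin 2) ℝ)
    (hP : P.IsHomogeneous (2 * m)) (B : Matrix (Fin 2) (Fin 2) ℝ)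
    (hB2 : (B - 1) * (B - 1) = 0) (hBne : B ≠ 1)
    (hinvB : ∀ v : Fin 2 → ℝ, eval (B.mulVec v) P = eval v P) :
    ∃ c q, MvPolynomial.IsHomogeneous q 2 ∧
      ∀ v : Fin 2 → ℝ, eval v P = c * (eval v q) ^ m := by
  set N := B - 1 with hNdef
  have hNne : N ≠ 0 := fun h => hBne (by rw [← sub_eq_zero]; exact h)
  obtain ⟨w, hw⟩ : ∃ w : Fin 2 → ℝ, N.mulVec w ≠ 0 := by
    by_contra hcon
    push_neg at hcon
    apply hNne
    ext i j
    have h := congrFun (hcon (Pi.single j 1)) i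
    rw [Matrix.mulVec_single] at h
    simpa using h
  set u := N.mulVec w with hudef
  have hNu : N.mulVec u = 0 := by
    rw [hudef, Matrix.mulVec_mulVec, hB2]
    simp [Matrix.zero_mulVec]
  have hBA : B = N + 1 := by rw [hNdef]; abel
  have hAu : B.mulVec u = u := by
    rw [hBA, Matrix.add_mulVec, Matrix.one_mulVec, hNu, zero_add]
  have hAw : B.mulVec w = u + w := by
    rw [hBA, Matrix.add_mulVec, Matrix.one_mulVec, hudef]
  have hD : u 0 * w 1 - u 1 * w 0 ≠ 0 := by
    intro hDel
    have hu01 : u 0 ≠ 0 ∨ u 1 ≠ 0 := by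
      by_contra hcontra
      push_neg at hcontra
      exact hw (funext (Fin.forall_fin_two.mpr ⟨hcontra.1, hcontra.2⟩))
    have key : N.mulVec w = 0 := by
      rcases hu01 with h0 | h1
      · have hs : w = (w 0 / u 0) • u := by
          apply _root_.funext
          rw [Fin.forall_fin_two]
          constructor
          · show w 0 = (w 0 / u 0) • u 0
            rw [smul_eq_mul]
            field_simp
          · show w 1 = (w 0 / u 0) • u 1
            rw [smul_eq_mul]
            field_simp
            linear_combination hDel
        rw [hs, Matrix.mulVec_smul, hNu, smul_zero]
      · have hs : w = (w 1 / u 1) • u := by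
          apply _root_.funext
          rw [Fin.forall_fin_two]
          constructor
          · show w 0 = (w 1 / u 1) • u 0
            rw [smul_eq_mul]
            field_simp
            linear_combination -hDel
          · show w 1 = (w 1 / u 1) • u 1
            rw [smul_eq_mul]
            field_simp
        rw [hs, Matrix.mulVec_smul, hNu, smul_zero]
    rw [← hudef] at key
    exact hw key
  have hinvQ : ∀ x y : ℝ, eval ((x + y) • u + y • w) P = eval (x • u + y • w) P := by
    intro x y
    have h := hinvB (x • u + y • w)
    rw [Matrix.mulVec_add, Matrix.mulVec_smul, Matrix.mulVec_smul, hAu, hAw] at h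
    have e1 : x • u + y • (u + w) = (x + y) • u + y • w := by module
    rw [e1] at h
    exact h
  exact unip_case m hm P hP u w hD hinvQ

lemma eigen_case (m : ℕ) (P : MvPolynomial (Fin 2) ℝ) (hP : P.IsHomogeneous (2 * m))
    (A : Matrix (Fin 2) (Fin 2) ℝ)
    (hinvA : ∀ v : Fin 2 → ℝ, eval (A.mulVec v) P = eval v P)
    (T D : ℝ) (hCH : A * A = T • A - D • 1)
    (hb : A 0 1 ≠ 0) (habsD : |D| = 1) (hT : T ≠ 0) (hdisc : 0 < T ^ 2 - 4 * D) :
    ∃ c q, MvPolynomial.IsHomogeneous q 2 ∧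
      ∀ v : Fin 2 → ℝ, eval v P = c * (eval v q) ^ m := by
  have hs2 : Real.sqrt (T ^ 2 - 4 * D) ^ 2 = T ^ 2 - 4 * D := Real.sq_sqrt (le_of_lt hdisc)
  have hs0 : 0 < Real.sqrt (T ^ 2 - 4 * D) := Real.sqrt_pos.mpr hdisc
  set s := Real.sqrt (T ^ 2 - 4 * D) with hsdef
  set lam := (T + s) / 2 with hlamdef
  set mu := (T - s) / 2 with hmudef
  have hlm : lam * mu = D := by rw [hlamdef, hmudef]; linear_combination (-(1:ℝ)/4) * hs2
  have hchl : lam ^ 2 = T * lam - D := by rw [hlamdef]; linear_combination ((1:ℝ)/4) * hs2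
  have hchm : mu ^ 2 = T * mu - D := by rw [hmudef]; linear_combination ((1:ℝ)/4) * hs2
  have hlmne : lam ≠ mu := by
    intro h
    rw [hlamdef, hmudef] at h
    linarith
  have habsprod : |lam| * |mu| = 1 := by rw [← abs_mul, hlm, habsD]
  have habsne : |lam| ≠ |mu| := by
    intro h
    rcases abs_eq_abs.mp h with h1 | h2
    · exact hlmne h1
    · apply hT
      rw [hlamdef, hmudef] at h2
      linarith
  have h01 : A 0 0 * A 0 1 + A 0 1 * A 1 1 = T * A 0 1 := by
    have h := congrFun (congrFun hCH 0) 1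
    simpa [Matrix.mul_apply, Fin.sum_univ_two, Matrix.sub_apply, Matrix.smul_apply,
      Matrix.one_apply, smul_eq_mul] using h
  have h00 : A 0 0 * A 0 0 + A 0 1 * A 1 0 = T * A 0 0 - D := by
    have h := congrFun (congrFun hCH 0) 0
    simpa [Matrix.mul_apply, Fin.sum_univ_two, Matrix.sub_apply, Matrix.smul_apply,
      Matrix.one_apply, smul_eq_mul] using h
  have hTr : A 0 0 + A 1 1 = T := by
    apply mul_right_cancel₀ hb
    linear_combination h01
  have hAvec : ∀ r : ℝ, r ^ 2 = T * r - D →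
      A.mulVec ![A 0 1, r - A 0 0] = r • ![A 0 1, r - A 0 0] := by
    intro r hr
    funext i
    fin_cases i
    · show (A.mulVec ![A 0 1, r - A 0 0]) 0 = (r • ![A 0 1, r - A 0 0]) 0
      simp only [Matrix.mulVec, dotProduct, Fin.sum_univ_two, Matrix.cons_val_zero,
        Matrix.cons_val_one, Matrix.head_cons, Pi.smul_apply, smul_eq_mul]
      ring
    · show (A.mulVec ![A 0 1, r - A 0 0]) 1 = (r • ![A 0 1, r - A 0 0]) 1
      simp only [Matrix.mulVec, dotProduct, Fin.sum_univ_two, Matrix.cons_val_zero,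
        Matrix.cons_val_one, Matrix.head_cons, Pi.smul_apply, smul_eq_mul]
      linear_combination h00 - hr + (r - A 0 0) * hTr
  have hDgen : ∀ r1 r2 : ℝ, r1 ≠ r2 →
      (![A 0 1, r1 - A 0 0] : Fin 2 → ℝ) 0 * (![A 0 1, r2 - A 0 0] : Fin 2 → ℝ) 1
        - (![A 0 1, r1 - A 0 0] : Fin 2 → ℝ) 1 * (![A 0 1, r2 - A 0 0] : Fin 2 → ℝ) 0 ≠ 0 := by
    intro r1 r2 hne
    simp only [Matrix.cons_val_zero, Matrix.cons_val_one, Matrix.head_cons]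
    intro h
    have h2 : A 0 1 * (r2 - r1) ≠ 0 := mul_ne_zero hb (sub_ne_zero.mpr (Ne.symm hne))
    exact h2 (by linear_combination h)
  have hinvgen : ∀ (r1 r2 : ℝ) (u w : Fin 2 → ℝ), A.mulVec u = r1 • u → A.mulVec w = r2 • w →
      ∀ x y : ℝ, eval ((r1 * x) • u + (r2 * y) • w) P = eval (x • u + y • w) P := by
    intro r1 r2 u w hu hw x y
    have h := hinvA (x • u + y • w)
    rw [Matrix.mulVec_add, Matrix.mulVec_smul, Matrix.mulVec_smul, hu, hw] at h
    have e1 : x • r1 • u + y • r2 • w = (r1 * x) • u + (r2 * y) • w := by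
      rw [smul_smul, smul_smul, mul_comm x r1, mul_comm y r2]
    rw [e1] at h
    exact h
  rcases habsne.lt_or_gt with hlt | hlt
  · have hbig : 1 < |mu| := by nlinarith [abs_nonneg lam, abs_nonneg mu]
    exact diag_case m P hP ![A 0 1, mu - A 0 0] ![A 0 1, lam - A 0 0]
      (hDgen mu lam (Ne.symm hlmne)) mu lam hbig
      (by rw [mul_comm]; exact habsprod)
      (hinvgen mu lam _ _ (hAvec mu hchm) (hAvec lam hchl))
  · have hbig : 1 < |lam| := by nlinarith [abs_nonneg lam, abs_nonneg mu]
    exact diag_case m P hP ![A 0 1, lam - A 0 0] ![A 0 1, mu - A 0 0]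
      (hDgen lam mu hlmne) lam mu hbig habsprod
      (hinvgen lam mu _ _ (hAvec lam hchl) (hAvec mu hchm))

end SqAux

/-- Let `n = 2m` be even and positive, `C ⊆ ℝ²` a strict closed convex cone with nonempty
interior preserved by `g ∈ GL(2,ℤ)`, and `P` a homogeneous polynomial of degree `n`
invariant under `g`, not vanishing at some interior point of `C`, and not of the form
`c·qᵐ` for a real number `c` and a homogeneous quadratic polynomial `q`. Then `g² = 1`. -/
theorem sq_eq_one_of_even_invariant_form (m : ℕ) (hm : 0 < m)
    (C : Set (Fin 2 → ℝ))
    (hclosed : IsClosed C) (hconv : Convex ℝ C)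
    (hcone : ∀ v ∈ C, ∀ t : ℝ, 0 ≤ t → t • v ∈ C)
    (hstrict : ∀ v : Fin 2 → ℝ, v ∈ C → -v ∈ C → v = 0)
    (hint : (interior C).Nonempty)
    (g : Matrix (Fin 2) (Fin 2) ℤ) (hg : g.det = 1 ∨ g.det = -1)
    (hpres : (fun v : Fin 2 → ℝ => (g.map (Int.cast : ℤ → ℝ)).mulVec v) '' C = C)
    (P : MvPolynomial (Fin 2) ℝ) (hP : P.IsHomogeneous (2 * m))
    (hinv : ∀ v : Fin 2 → ℝ,
      MvPolynomial.eval ((g.map (Int.cast : ℤ → ℝ)).mulVec v) P = MvPolynomial.eval v P)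
    (hne : ∃ v₀ ∈ interior C, MvPolynomial.eval v₀ P ≠ 0)
    (hnq : ¬ ∃ (c : ℝ) (q : MvPolynomial (Fin 2) ℝ), q.IsHomogeneous 2 ∧
      ∀ v : Fin 2 → ℝ, MvPolynomial.eval v P = c * (MvPolynomial.eval v q) ^ m) :
    g ^ 2 = 1 := by
  classical
  by_cases hgg : g ^ 2 = 1
  · exact hgg
  exfalso
  set A := g.map (Int.cast : ℤ → ℝ) with hAdef
  have hginj : ∀ M N : Matrix (Fin 2) (Fin 2) ℤ,
      M.map (Int.cast : ℤ → ℝ) = N.map (Int.cast : ℤ → ℝ) → M = N := by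
    intro M N h
    ext i j
    have h2 := congrFun (congrFun h i) j
    simp only [Matrix.map_apply] at h2
    exact_mod_cast h2
  have hmapmul : (g * g).map (Int.cast : ℤ → ℝ) = A * A := by
    rw [hAdef]
    have h := Matrix.map_mul (L := g) (M := g) (f := Int.castRingHom ℝ)
    rw [Int.coe_castRingHom] at h
    exact h
  have hmem : ∀ v ∈ C, A.mulVec v ∈ C := by
    intro v hv
    have h : A.mulVec v ∈ (fun v : Fin 2 → ℝ => A.mulVec v) '' C := ⟨v, hv, rfl⟩
    rwa [hpres] at h
  have hadd : ∀ x ∈ C, ∀ y ∈ C, x + y ∈ C := by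
    intro x hx y hy
    have hmid : (1/2 : ℝ) • x + (1/2 : ℝ) • y ∈ C :=
      hconv hx hy (by norm_num) (by norm_num) (by norm_num)
    have h2 := hcone _ hmid 2 (by norm_num)
    have h3 : (2:ℝ) • ((1/2 : ℝ) • x + (1/2 : ℝ) • y) = x + y := by
      rw [smul_add, smul_smul, smul_smul]
      norm_num
    rwa [h3] at h2
  obtain ⟨v, hvC, hv0⟩ : ∃ v ∈ C, v ≠ 0 := by
    obtain ⟨p, hp⟩ := hint
    by_cases hp0 : p = 0
    · exfalso
      rw [hp0] at hp
      rw [mem_interior_iff_mem_nhds, Metric.mem_nhds_iff] at hp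
      obtain ⟨ε, hε, hball⟩ := hp
      have hv1 : (fun _ : Fin 2 => ε/2) ∈ C := by
        apply hball
        rw [mem_ball_zero_iff]
        rw [pi_norm_lt_iff hε]
        intro i
        rw [Real.norm_eq_abs, abs_of_pos (by linarith)]
        linarith
      have hv2 : -(fun _ : Fin 2 => ε/2) ∈ C := by
        apply hball
        rw [mem_ball_zero_iff, norm_neg]
        rw [pi_norm_lt_iff hε]
        intro i
        rw [Real.norm_eq_abs, abs_of_pos (by linarith)]
        linarith
      have h4 := hstrict _ hv1 hv2
      have h5 := congrFun h4 0
      simp at h5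
      linarith
    · exact ⟨p, interior_subset hp, hp0⟩
  have hCH : A * A = ((g 0 0 + g 1 1 : ℤ) : ℝ) • A - ((g.det : ℤ) : ℝ) • 1 := by
    rw [hAdef]
    ext i j
    fin_cases i <;> fin_cases j <;>
      (simp [Matrix.mul_apply, Fin.sum_univ_two, Matrix.smul_apply, Matrix.sub_apply,
        Matrix.one_apply, Matrix.map_apply, Matrix.det_fin_two, smul_eq_mul]
       push_cast
       ring)
  rcases hg with hd | hd
  · -- det = 1
    by_cases h3 : 3 ≤ |g 0 0 + g 1 1|
    · have hbZ : g 0 1 ≠ 0 := by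
        intro hb0
        have hdet : g 0 0 * g 1 1 = 1 := by rw [← hd, Matrix.det_fin_two, hb0]; ring
        rcases Int.eq_one_or_neg_one_of_mul_eq_one' hdet with ⟨ha, hb⟩ | ⟨ha, hb⟩ <;>
          rw [ha, hb] at h3 <;> norm_num at h3
      have hb : A 0 1 ≠ 0 := by
        rw [hAdef]
        simp only [Matrix.map_apply]
        exact_mod_cast hbZ
      have hCH' : A * A = ((g 0 0 + g 1 1 : ℤ) : ℝ) • A - (1:ℝ) • 1 := by
        rw [hCH, hd]; norm_num
      have hT : ((g 0 0 + g 1 1 : ℤ) : ℝ) ≠ 0 := by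
        have : (g 0 0 + g 1 1 : ℤ) ≠ 0 := by
          intro h
          rw [h] at h3
          norm_num at h3
        exact_mod_cast this
      have hdisc : 0 < ((g 0 0 + g 1 1 : ℤ) : ℝ) ^ 2 - 4 * 1 := by
        have h9 : (3:ℝ) ≤ |((g 0 0 + g 1 1 : ℤ) : ℝ)| := by
          rw [← Int.cast_abs]
          exact_mod_cast h3
        nlinarith [sq_abs ((g 0 0 + g 1 1 : ℤ) : ℝ)]
      exact hnq (SqAux.eigen_case m P hP A hinv _ 1 hCH' hb (by norm_num) hT hdisc)
    · push_neg at h3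
      rw [abs_lt] at h3
      have htv : g 0 0 + g 1 1 = -2 ∨ g 0 0 + g 1 1 = -1 ∨ g 0 0 + g 1 1 = 0 ∨
          g 0 0 + g 1 1 = 1 ∨ g 0 0 + g 1 1 = 2 := by omega
      rcases htv with ht | ht | ht | ht | ht
      · -- t = -2
        by_cases hgm1 : g = -1
        · exact hgg (by rw [hgm1]; norm_num)
        · have hCC : A * A = -A - A - 1 := by
            rw [hCH, ht, hd]; push_cast; module
          have hA1sq : (A + 1) * (A + 1) = 0 := by
            have hexp : (A + 1) * (A + 1) = A * A + A + A + 1 := by noncomm_ring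
            rw [hexp, hCC]; abel
          have hB1 : A * A - 1 = (-2:ℝ) • (A + 1) := by rw [hCC]; module
          have hBsq : (A * A - 1) * (A * A - 1) = 0 := by
            rw [hB1, Matrix.smul_mul, Matrix.mul_smul, hA1sq, smul_zero, smul_zero]
          have hBne : A * A ≠ 1 := by
            intro h
            apply hgg
            rw [pow_two]
            apply hginj
            rw [hmapmul, h]
            simp
          have hinvB : ∀ v : Fin 2 → ℝ,
              MvPolynomial.eval ((A * A).mulVec v) P = MvPolynomial.eval v P := by
            intro v
            rw [← Matrix.mulVec_mulVec, hinv, hinv]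
          exact hnq (SqAux.unip_matrix_case m hm P hP (A * A) hBsq hBne hinvB)
      · -- t = -1
        have hCC : A * A = -A - 1 := by rw [hCH, ht, hd]; push_cast; module
        have hw := hmem v hvC
        have hsum := hadd v hvC _ hw
        have h2 := hmem _ hw
        have h4 : A.mulVec (A.mulVec v) = -(v + A.mulVec v) := by
          rw [Matrix.mulVec_mulVec, hCC]
          rw [show (-A - 1 : Matrix (Fin 2) (Fin 2) ℝ) = -(A + 1) by abel]
          rw [Matrix.neg_mulVec, Matrix.add_mulVec, Matrix.one_mulVec,
            add_comm (A.mulVec v) v]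
        rw [h4] at h2
        have hz := hstrict _ hsum h2
        have hmv : A.mulVec v = -v := eq_neg_of_add_eq_zero_right hz
        apply hv0
        apply hstrict v hvC
        rw [← hmv]
        exact hw
      · -- t = 0
        have hCC : A * A = -1 := by rw [hCH, ht, hd]; push_cast; module
        have h2 := hmem _ (hmem v hvC)
        rw [Matrix.mulVec_mulVec, hCC, Matrix.neg_mulVec, Matrix.one_mulVec] at h2
        exact hv0 (hstrict v hvC h2)
      · -- t = 1
        have hCC : A * A = A - 1 := by rw [hCH, ht, hd]; push_cast; module
        have h2 := hmem _ (hmem _ (hmem v hvC))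
        rw [Matrix.mulVec_mulVec, Matrix.mulVec_mulVec] at h2
        have h5 : A * A * A = -1 := by
          rw [hCC, Matrix.sub_mul, Matrix.one_mul, hCC]; abel
        rw [h5, Matrix.neg_mulVec, Matrix.one_mulVec] at h2
        exact hv0 (hstrict v hvC h2)
      · -- t = 2
        by_cases hg1 : g = 1
        · exact hgg (by rw [hg1]; norm_num)
        · have hCC : A * A = A + A - 1 := by rw [hCH, ht, hd]; push_cast; module
          have hsq : (A - 1) * (A - 1) = 0 := by
            have hexp : (A - 1) * (A - 1) = A * A - A - A + 1 := by noncomm_ring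
            rw [hexp, hCC]; abel
          have hAne : A ≠ 1 := by
            intro h
            apply hg1
            apply hginj
            rw [← hAdef, h]
            simp
          exact hnq (SqAux.unip_matrix_case m hm P hP A hsq hAne hinv)
  · -- det = -1
    by_cases ht0 : g 0 0 + g 1 1 = 0
    · apply hgg
      have hCC : A * A = 1 := by rw [hCH, ht0, hd]; push_cast; module
      rw [pow_two]
      apply hginj
      rw [hmapmul, hCC]
      simp
    · have hbZ : g 0 1 ≠ 0 := by
        intro hb0
        have hdet : g 0 0 * g 1 1 = -1 := by rw [← hd, Matrix.det_fin_two, hb0]; ring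
        rcases Int.eq_one_or_neg_one_of_mul_eq_neg_one' hdet with ⟨ha, hb⟩ | ⟨ha, hb⟩ <;> omega
      have hb : A 0 1 ≠ 0 := by
        rw [hAdef]
        simp only [Matrix.map_apply]
        exact_mod_cast hbZ
      have hCH' : A * A = ((g 0 0 + g 1 1 : ℤ) : ℝ) • A - (-1:ℝ) • 1 := by
        rw [hCH, hd]; push_cast; ring_nf
      have hT : ((g 0 0 + g 1 1 : ℤ) : ℝ) ≠ 0 := by exact_mod_cast ht0
      have hdisc : 0 < ((g 0 0 + g 1 1 : ℤ) : ℝ) ^ 2 - 4 * (-1) := by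
        nlinarith [sq_nonneg ((g 0 0 + g 1 1 : ℤ) : ℝ)]
      exact hnq (SqAux.eigen_case m P hP A hinv _ (-1) hCH' hb (by norm_num) hT hdisc)
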